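/- arXiv:1410.6840 — 3 statements merged into one kernel-verified Lean document; each statement's English description precedes it below -/
import Mathlib

section
/- Let T > 0, let A, B ∈ ℝ^{2×2}, C ∈ ℝ², let Q ∈ ℝ^{2×2} be symmetric positive semidefinite, R ∈ ℝ^{2×2} symmetric positive definite, φ ∈ ℝ^{2×2} symmetric positive semidefinite, and L : [0,T] → ℝ² continuous. Suppose P : [0,T] → ℝ^{2×2} (symmetric-valued), Ψ : [0,T] → ℝ² and χ : [0,T] → ℝ are differentiable and satisfy: P'(t) + P(t)A + AᵀP(t) − P(t)BR⁻¹BᵀP(t) + Q = 0 with P(T) = φ; Ψ'(t) + AᵀΨ(t) + P(t)C − P(t)BR⁻¹BᵀΨ(t) + L(t) = 0 with Ψ(T) = 0; χ'(t) + Ψ(t)ᵀC − (1/2)Ψ(t)ᵀBR⁻¹BᵀΨ(t) = 0 with χ(T) = 0, and set v(X,t) = (1/2)XᵀP(t)X + Ψ(t)ᵀX + χ(t). Then for every continuous control u : [0,T] → ℝ² and every differentiable trajectory X : [0,T] → ℝ² with X'(t) = AX(t) + Bu(t) + C for all t, the cost J := ∫₀ᵀ [ (1/2)X(t)ᵀQX(t)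 + (1/2)u(t)ᵀRu(t) + L(t)ᵀX(t) ] dt + (1/2)X(T)ᵀφX(T) satisfies J ≥ v(X(0),0); moreover, equality holds if u(t) = −R⁻¹Bᵀ(P(t)X(t) + Ψ(t)) for all t ∈ [0,T]. -/
open Matrix Set MeasureTheory

private lemma dv1 (v w : Fin 2 → ℝ) (M : Matrix (Fin 2) (Fin 2) ℝ) :
    v ⬝ᵥ (M *ᵥ w) = (Mᵀ *ᵥ v) ⬝ᵥ w := by
  rw [dotProduct_mulVec, mulVec_transpose]

private lemma dv2 (v w : Fin 2 → ℝ) (M : Matrix (Fin 2) (Fin 2) ℝ) :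
    (M *ᵥ v) ⬝ᵥ w = v ⬝ᵥ (Mᵀ *ᵥ w) := by
  rw [dv1, transpose_transpose]

private lemma contOn_dot {s : Set ℝ} {v w : ℝ → Fin 2 → ℝ} (hv : ContinuousOn v s)
    (hw : ContinuousOn w s) : ContinuousOn (fun t => v t ⬝ᵥ w t) s := by
  have hvi : ∀ i, ContinuousOn (fun t => v t i) s := fun i =>
    (continuous_apply i).comp_continuousOn hv
  have hwi : ∀ i, ContinuousOn (fun t => w t i) s := fun i =>
    (continuous_apply i).comp_continuousOn hw
  simp only [dotProduct, Fin.sum_univ_two]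
  exact ((hvi 0).mul (hwi 0)).add ((hvi 1).mul (hwi 1))

private lemma contOn_mulVec' {s : Set ℝ} {M : ℝ → Matrix (Fin 2) (Fin 2) ℝ}
    {v : ℝ → Fin 2 → ℝ} (hM : ∀ i j, ContinuousOn (fun t => M t i j) s)
    (hv : ContinuousOn v s) : ContinuousOn (fun t => M t *ᵥ v t) s := by
  have hvi : ∀ i, ContinuousOn (fun t => v t i) s := fun i =>
    (continuous_apply i).comp_continuousOn hv
  apply continuousOn_pi.2
  intro i
  simp only [mulVec, dotProduct, Fin.sum_univ_two]
  exact ((hM i 0).mul (hvi 0)).add ((hM i 1).mul (hvi 1))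

theorem stmt_1
    (T : ℝ) (hT : 0 < T)
    (A B : Matrix (Fin 2) (Fin 2) ℝ) (C : Fin 2 → ℝ)
    (Q R φ : Matrix (Fin 2) (Fin 2) ℝ)
    (hQ : Q.PosSemidef) (hR : R.PosDef) (hφ : φ.PosSemidef)
    (L : ℝ → Fin 2 → ℝ) (hL : ContinuousOn L (Icc 0 T))
    (P P' : ℝ → Matrix (Fin 2) (Fin 2) ℝ)
    (Ψ Ψ' : ℝ → Fin 2 → ℝ) (χ χ' : ℝ → ℝ)
    (hPsymm : ∀ t ∈ Icc (0:ℝ) T, (P t).IsSymm)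
    (hPdiff : ∀ t ∈ Icc (0:ℝ) T, ∀ i j,
      HasDerivWithinAt (fun s => P s i j) (P' t i j) (Icc 0 T) t)
    (hΨdiff : ∀ t ∈ Icc (0:ℝ) T, HasDerivWithinAt Ψ (Ψ' t) (Icc 0 T) t)
    (hχdiff : ∀ t ∈ Icc (0:ℝ) T, HasDerivWithinAt χ (χ' t) (Icc 0 T) t)
    (hPeq : ∀ t ∈ Icc (0:ℝ) T,
      P' t + P t * A + Aᵀ * P t - P t * B * R⁻¹ * Bᵀ * P t + Q = 0)
    (hPT : P T = φ)
    (hΨeq : ∀ t ∈ Icc (0:ℝ) T,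
      Ψ' t + Aᵀ *ᵥ Ψ t + P t *ᵥ C - (P t * B * R⁻¹ * Bᵀ) *ᵥ Ψ t + L t = 0)
    (hΨT : Ψ T = 0)
    (hχeq : ∀ t ∈ Icc (0:ℝ) T,
      χ' t + Ψ t ⬝ᵥ C - (1 / 2) * (Ψ t ⬝ᵥ ((B * R⁻¹ * Bᵀ) *ᵥ Ψ t)) = 0)
    (hχT : χ T = 0) :
    ∀ (u X : ℝ → Fin 2 → ℝ),
      ContinuousOn u (Icc 0 T) →
      (∀ t ∈ Icc (0:ℝ) T,
        HasDerivWithinAt X (A *ᵥ X t + B *ᵥ u t + C) (Icc 0 T) t) →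
      ((1 / 2) * (X 0 ⬝ᵥ (P 0 *ᵥ X 0)) + Ψ 0 ⬝ᵥ X 0 + χ 0 ≤
          (∫ t in (0:ℝ)..T,
            ((1 / 2) * (X t ⬝ᵥ (Q *ᵥ X t)) + (1 / 2) * (u t ⬝ᵥ (R *ᵥ u t)) + L t ⬝ᵥ X t))
            + (1 / 2) * (X T ⬝ᵥ (φ *ᵥ X T))) ∧
        ((∀ t ∈ Icc (0:ℝ) T, u t = -((R⁻¹ * Bᵀ) *ᵥ (P t *ᵥ X t + Ψ t))) →
          (∫ t in (0:ℝ)..T,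
            ((1 / 2) * (X t ⬝ᵥ (Q *ᵥ X t)) + (1 / 2) * (u t ⬝ᵥ (R *ᵥ u t)) + L t ⬝ᵥ X t))
            + (1 / 2) * (X T ⬝ᵥ (φ *ᵥ X T))
            = (1 / 2) * (X 0 ⬝ᵥ (P 0 *ᵥ X 0)) + Ψ 0 ⬝ᵥ X 0 + χ 0) := by
  intro u X hu hX
  have hT' : (0:ℝ) ≤ T := hT.le
  have hIcc : uIcc (0:ℝ) T = Icc 0 T := uIcc_of_le hT'
  -- continuity of the data
  have hXc : ContinuousOn X (Icc 0 T) := fun t ht => (hX t ht).continuousWithinAt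
  have hΨc : ContinuousOn Ψ (Icc 0 T) := fun t ht => (hΨdiff t ht).continuousWithinAt
  have hPc : ∀ i j, ContinuousOn (fun t => P t i j) (Icc 0 T) :=
    fun i j t ht => (hPdiff t ht i j).continuousWithinAt
  -- invertibility and symmetry of R
  have hRd : IsUnit R.det := (Matrix.isUnit_iff_isUnit_det R).1 hR.isUnit
  have hRR : R * R⁻¹ = 1 := mul_nonsing_inv R hRd
  have hRsym : Rᵀ = R := by
    ext i j
    simpa using congrFun (congrFun hR.isHermitian i) j
  have hRisym : R⁻¹ᵀ = R⁻¹ := by rw [transpose_nonsing_inv, hRsym]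
  -- abbreviations
  set XD : ℝ → Fin 2 → ℝ := fun t => A *ᵥ X t + B *ᵥ u t + C with hXDdef
  set V : ℝ → ℝ := fun t => (1 / 2) * (X t ⬝ᵥ (P t *ᵥ X t)) + Ψ t ⬝ᵥ X t + χ t with hVdef
  set DV : ℝ → ℝ := fun t =>
      (1 / 2) * (XD t ⬝ᵥ (P t *ᵥ X t) + X t ⬝ᵥ (P' t *ᵥ X t) + X t ⬝ᵥ (P t *ᵥ XD t))
        + (Ψ' t ⬝ᵥ X t + Ψ t ⬝ᵥ XD t) + χ' t with hDVdef
  set W : ℝ → Fin 2 → ℝ := fun t => u t + (R⁻¹ * Bᵀ) *ᵥ (P t *ᵥ X t + Ψ t) with hWdef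
  set f : ℝ → ℝ := fun t =>
      ((1 / 2) * (X t ⬝ᵥ (Q *ᵥ X t)) + (1 / 2) * (u t ⬝ᵥ (R *ᵥ u t)) + L t ⬝ᵥ X t) with hfdef
  set g : ℝ → ℝ := fun t => (1 / 2) * (W t ⬝ᵥ (R *ᵥ W t)) with hgdef
  -- derivative of V
  have hVd : ∀ t ∈ Icc (0:ℝ) T, HasDerivWithinAt V (DV t) (Icc 0 T) t := by
    intro t ht
    have hXi := hasDerivWithinAt_pi.1 (hX t ht)
    have hΨi := hasDerivWithinAt_pi.1 (hΨdiff t ht)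
    have hPij := hPdiff t ht
    have e : V = fun s =>
        (1 / 2) * (X s 0 * (P s 0 0 * X s 0 + P s 0 1 * X s 1)
          + X s 1 * (P s 1 0 * X s 0 + P s 1 1 * X s 1))
        + (Ψ s 0 * X s 0 + Ψ s 1 * X s 1) + χ s := by
      funext s
      simp [hVdef, dotProduct, mulVec, Fin.sum_univ_two]
    rw [e]
    have hq := (((hXi 0).mul (((hPij 0 0).mul (hXi 0)).add ((hPij 0 1).mul (hXi 1)))).add
        ((hXi 1).mul (((hPij 1 0).mul (hXi 0)).add ((hPij 1 1).mul (hXi 1)))))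
    have hlin := ((hΨi 0).mul (hXi 0)).add ((hΨi 1).mul (hXi 1))
    have hd := ((hq.const_mul ((1:ℝ) / 2)).add hlin).add (hχdiff t ht)
    exact hd.congr_deriv (by
      simp only [hDVdef, hXDdef, dotProduct, mulVec, Fin.sum_univ_two, Pi.mul_apply, Pi.add_apply]
      ring)
  have hVc : ContinuousOn V (Icc 0 T) := fun t ht => (hVd t ht).continuousWithinAt
  -- continuity of f and g
  have hWc : ContinuousOn W (Icc 0 T) := by
    apply hu.add
    exact contOn_mulVec' (M := fun _ => R⁻¹ * Bᵀ) (fun i j => continuousOn_const)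
      ((contOn_mulVec' hPc hXc).add hΨc)
  have hgc : ContinuousOn g (Icc 0 T) :=
    continuousOn_const.mul (contOn_dot hWc
      (contOn_mulVec' (M := fun _ => R) (fun i j => continuousOn_const) hWc))
  have hfc : ContinuousOn f (Icc 0 T) :=
    ((continuousOn_const.mul (contOn_dot hXc
        (contOn_mulVec' (M := fun _ => Q) (fun i j => continuousOn_const) hXc))).add
      (continuousOn_const.mul (contOn_dot hu
        (contOn_mulVec' (M := fun _ => R) (fun i j => continuousOn_const) hu)))).add
      (contOn_dot hL hXc)
  -- the fundamental pointwise identity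
  have hkey : ∀ t ∈ Icc (0:ℝ) T, f t + DV t = g t := by
    intro t ht
    have hP' : P' t = P t * B * R⁻¹ * Bᵀ * P t - P t * A - Aᵀ * P t - Q := by
      have h := hPeq t ht
      apply eq_of_sub_eq_zero
      rw [← h]; abel
    have hΨ' : Ψ' t = (P t * B * R⁻¹ * Bᵀ) *ᵥ Ψ t - Aᵀ *ᵥ Ψ t - P t *ᵥ C - L t := by
      have h := hΨeq t ht
      apply eq_of_sub_eq_zero
      rw [← h]; abel
    have hχ' : χ' t = 1 / 2 * (Ψ t ⬝ᵥ ((B * R⁻¹ * Bᵀ) *ᵥ Ψ t)) - Ψ t ⬝ᵥ C := by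
      have h := hχeq t ht
      linarith
    have hPs : (P t)ᵀ = P t := hPsymm t ht
    simp only [hfdef, hDVdef, hgdef, hXDdef, hWdef, hP', hΨ', hχ']
    simp only [Matrix.add_mulVec, Matrix.sub_mulVec, mulVec_add, dotProduct_add,
      add_dotProduct, dotProduct_sub, sub_dotProduct, mulVec_mulVec]
    have hc1 : R * (R⁻¹ * Bᵀ * P t) = Bᵀ * P t := by
      rw [← Matrix.mul_assoc, ← Matrix.mul_assoc, hRR, Matrix.one_mul]
    have hc2 : R * (R⁻¹ * Bᵀ) = Bᵀ := by
      rw [← Matrix.mul_assoc, hRR, Matrix.one_mul]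
    simp only [hc1, hc2, dv2, transpose_mul, transpose_transpose, hPs, hRisym, hRsym,
      mulVec_mulVec, Matrix.mul_assoc]
    have hR'R : R⁻¹ * R = 1 := nonsing_inv_mul R hRd
    have hcan : ∀ M : Matrix (Fin 2) (Fin 2) ℝ, R * (R⁻¹ * M) = M := fun M => by
      rw [← Matrix.mul_assoc, hRR, Matrix.one_mul]
    simp only [hcan, hR'R, Matrix.mul_one]
    have br1 : X t ⬝ᵥ (P t * (B * (R⁻¹ * Bᵀ))) *ᵥ Ψ t
        = Ψ t ⬝ᵥ (B * (R⁻¹ * (Bᵀ * P t))) *ᵥ X t := by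
      rw [dotProduct_comm, dv2]
      simp only [transpose_mul, transpose_transpose, hRisym, hPs, Matrix.mul_assoc]
    have br2 : u t ⬝ᵥ Bᵀ *ᵥ Ψ t = Ψ t ⬝ᵥ B *ᵥ u t := by
      rw [dotProduct_comm, dv2, transpose_transpose]
    have br3 : X t ⬝ᵥ P t *ᵥ C = C ⬝ᵥ P t *ᵥ X t := by
      rw [dotProduct_comm, dv2, hPs]
    linarith [br1, br2, br3]
  -- integrability
  have hgi : IntervalIntegrable g volume 0 T := (hIcc ▸ hgc).intervalIntegrable
  have hfi : IntervalIntegrable f volume 0 T := (hIcc ▸ hfc).intervalIntegrable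
  have hDVi : IntervalIntegrable DV volume 0 T := by
    have h1 : IntervalIntegrable (fun t => g t - f t) volume 0 T :=
      (hIcc ▸ (hgc.sub hfc)).intervalIntegrable
    rw [intervalIntegrable_iff] at h1 ⊢
    refine h1.congr_fun ?_ measurableSet_uIoc
    intro t ht
    rw [uIoc_of_le hT'] at ht
    have := hkey t ⟨ht.1.le, ht.2⟩
    simp only
    linarith
  -- FTC
  have hFTC : ∫ t in (0:ℝ)..T, DV t = V T - V 0 := by
    apply intervalIntegral.integral_eq_sub_of_hasDeriv_right_of_le hT' hVc
    · intro x hx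
      exact ((hVd x (Ioo_subset_Icc_self hx)).hasDerivAt
        (Icc_mem_nhds hx.1 hx.2)).hasDerivWithinAt
    · exact hDVi
  have hVT : V T = (1 / 2) * (X T ⬝ᵥ (φ *ᵥ X T)) := by
    simp [hVdef, hPT, hΨT, hχT]
  have hIf : ∫ t in (0:ℝ)..T, f t = (∫ t in (0:ℝ)..T, g t) - (V T - V 0) := by
    rw [← hFTC, ← intervalIntegral.integral_sub hgi hDVi]
    apply intervalIntegral.integral_congr
    intro t ht
    rw [hIcc] at ht
    have := hkey t ht
    simp only
    linarith
  have hV0 : (1 / 2) * (X 0 ⬝ᵥ (P 0 *ᵥ X 0)) + Ψ 0 ⬝ᵥ X 0 + χ 0 = V 0 := rfl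
  constructor
  · have hInt0 : 0 ≤ ∫ t in (0:ℝ)..T, g t := by
      apply intervalIntegral.integral_nonneg hT'
      intro τ hτ
      have h := hR.posSemidef.dotProduct_mulVec_nonneg (W τ)
      simp only [star_trivial] at h
      show 0 ≤ (1 / 2) * (W τ ⬝ᵥ (R *ᵥ W τ))
      linarith
    have hIf' : intervalIntegral f 0 T volume = (∫ t in (0:ℝ)..T, g t) - (V T - V 0) := hIf
    rw [hV0, hIf', ← hVT]
    linarith [hInt0]
  · intro hopt
    have hg0 : ∫ t in (0:ℝ)..T, g t = 0 := by
      have : ∫ t in (0:ℝ)..T, g t = ∫ _t in (0:ℝ)..T, (0:ℝ) := by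
        apply intervalIntegral.integral_congr
        intro τ hτ
        rw [hIcc] at hτ
        show (1 / 2) * (W τ ⬝ᵥ (R *ᵥ W τ)) = 0
        have hW0 : W τ = 0 := by
          show u τ + (R⁻¹ * Bᵀ) *ᵥ (P τ *ᵥ X τ + Ψ τ) = 0
          rw [hopt τ hτ]
          simp
        rw [hW0]
        simp
      simpa using this
    have hIf' : intervalIntegral f 0 T volume = (∫ t in (0:ℝ)..T, g t) - (V T - V 0) := hIf
    rw [hV0, hIf', ← hVT, hg0]
    ring
end

section
/- Let T > 0, let A, B ∈ ℝ^{2×2}, C ∈ ℝ², Q ∈ ℝ^{2×2} symmetric positive semidefinite, R ∈ ℝ^{2×2} symmetric positive definite, φ ∈ ℝ^{2×2} symmetric, L : [0,T] → ℝ² continuous, and let σ̂₁₁, σ̂₂₂ ≥ 0. Suppose P : [0,T] → ℝ^{2×2} (symmetric-valued), Ψ : [0,T] → ℝ² and χ : [0,T] → ℝ are differentiable and satisfy: P'(t) + P(t)A + AᵀP(t) − P(t)BR⁻¹BᵀP(t) + Q + P̃(t) = 0 with P(T) = φ, where P̃(t) is the diagonal matrix diag(σ̂₁₁² P₁₁(t),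 σ̂₂₂² P₂₂(t)); Ψ'(t) + AᵀΨ(t) + P(t)C − P(t)BR⁻¹BᵀΨ(t) + L(t) = 0 with Ψ(T) = 0; and χ'(t) + Ψ(t)ᵀC − (1/2)Ψ(t)ᵀBR⁻¹BᵀΨ(t) = 0 with χ(T) = 0. Define v(X,t) = (1/2)XᵀP(t)X + Ψ(t)ᵀX + χ(t). Then for every X = (X₁,X₂) ∈ ℝ² and t ∈ [0,T): ∂ₜv(X,t) + inf over u ∈ ℝ² of [ (P(t)X + Ψ(t))ᵀ(AX + Bu + C) + (1/2)XᵀQX + (1/2)uᵀRu + L(t)ᵀX ] + (1/2)( σ̂₁₁² X₁² ∂²v/∂X₁²(X,t) + σ̂₂₂² X₂² ∂²v/∂X₂²(X,t) ) = 0, the infimum is attained at u*(X,t) = −R⁻¹Bᵀ(P(t)X + Ψ(t)), and v(X,T) = (1/2)XᵀφX. -/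
open Matrix Set

private lemma quad_deriv2 (a b c : ℝ) :
    deriv (deriv (fun s : ℝ => a * s ^ 2 + b * s + c)) 0 = 2 * a := by
  have h1 : ∀ x : ℝ, HasDerivAt (fun s : ℝ => a * s ^ 2 + b * s + c) (2 * a * x + b) x := by
    intro x
    have h := (((hasDerivAt_pow 2 x).const_mul a).add
      ((hasDerivAt_id x).const_mul b)).add_const c
    refine h.congr_deriv ?_
    push_cast; ring
  have h2 : deriv (fun s : ℝ => a * s ^ 2 + b * s + c) = fun x => 2 * a * x + b :=
    funext fun x => (h1 x).deriv
  rw [h2]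
  have h3 : HasDerivAt (fun x : ℝ => 2 * a * x + b) (2 * a) 0 := by
    simpa using ((hasDerivAt_id (0:ℝ)).const_mul (2 * a)).add_const b
  simpa using h3.deriv

theorem stmt_4
    (T : ℝ) (hT : 0 < T)
    (A B : Matrix (Fin 2) (Fin 2) ℝ) (C : Fin 2 → ℝ)
    (Q R φ : Matrix (Fin 2) (Fin 2) ℝ)
    (hQ : Q.PosSemidef) (hR : R.PosDef) (hφ : φ.IsSymm)
    (L : ℝ → Fin 2 → ℝ) (hL : ContinuousOn L (Icc 0 T))
    (σ11 σ22 : ℝ) (hσ11 : 0 ≤ σ11) (hσ22 : 0 ≤ σ22)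
    (P P' : ℝ → Matrix (Fin 2) (Fin 2) ℝ)
    (Ψ Ψ' : ℝ → Fin 2 → ℝ) (χ χ' : ℝ → ℝ)
    (hPsymm : ∀ t ∈ Icc (0:ℝ) T, (P t).IsSymm)
    (hPdiff : ∀ t ∈ Icc (0:ℝ) T, ∀ i j,
      HasDerivWithinAt (fun s => P s i j) (P' t i j) (Icc 0 T) t)
    (hΨdiff : ∀ t ∈ Icc (0:ℝ) T, HasDerivWithinAt Ψ (Ψ' t) (Icc 0 T) t)
    (hχdiff : ∀ t ∈ Icc (0:ℝ) T, HasDerivWithinAt χ (χ' t) (Icc 0 T) t)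
    (hPeq : ∀ t ∈ Icc (0:ℝ) T,
      P' t + P t * A + Aᵀ * P t - P t * B * R⁻¹ * Bᵀ * P t + Q
        + Matrix.diagonal ![σ11 ^ 2 * P t 0 0, σ22 ^ 2 * P t 1 1] = 0)
    (hPT : P T = φ)
    (hΨeq : ∀ t ∈ Icc (0:ℝ) T,
      Ψ' t + Aᵀ *ᵥ Ψ t + P t *ᵥ C - (P t * B * R⁻¹ * Bᵀ) *ᵥ Ψ t + L t = 0)
    (hΨT : Ψ T = 0)
    (hχeq : ∀ t ∈ Icc (0:ℝ) T,
      χ' t + Ψ t ⬝ᵥ C - (1 / 2) * (Ψ t ⬝ᵥ ((B * R⁻¹ * Bᵀ) *ᵥ Ψ t)) = 0)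
    (hχT : χ T = 0) :
    ∀ X : Fin 2 → ℝ, ∀ t ∈ Ico (0:ℝ) T,
      let v : (Fin 2 → ℝ) → ℝ → ℝ := fun Y s =>
        (1 / 2) * (Y ⬝ᵥ (P s *ᵥ Y)) + Ψ s ⬝ᵥ Y + χ s
      let H : (Fin 2 → ℝ) → ℝ := fun u =>
        (P t *ᵥ X + Ψ t) ⬝ᵥ (A *ᵥ X + B *ᵥ u + C)
          + (1 / 2) * (X ⬝ᵥ (Q *ᵥ X)) + (1 / 2) * (u ⬝ᵥ (R *ᵥ u)) + L t ⬝ᵥ X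
      let ustar : Fin 2 → ℝ := -((R⁻¹ * Bᵀ) *ᵥ (P t *ᵥ X + Ψ t))
      let d2 : Fin 2 → ℝ := fun i =>
        deriv (deriv fun s : ℝ => v (X + s • (Pi.single i 1 : Fin 2 → ℝ)) t) 0
      (∀ u : Fin 2 → ℝ, H ustar ≤ H u) ∧
        HasDerivWithinAt (fun s => v X s)
          (-(H ustar + (1 / 2) * (σ11 ^ 2 * (X 0) ^ 2 * d2 0 + σ22 ^ 2 * (X 1) ^ 2 * d2 1)))
          (Icc 0 T) t ∧
        v X T = (1 / 2) * (X ⬝ᵥ (φ *ᵥ X)) := by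
  -- basic facts about R
  have hRT : Rᵀ = R := by
    have h := hR.1
    rwa [Matrix.IsHermitian, Matrix.conjTranspose_eq_transpose_of_trivial] at h
  have hRdet : IsUnit R.det := hR.det_pos.ne'.isUnit
  have hRinv : R * R⁻¹ = 1 := Matrix.mul_nonsing_inv R hRdet
  have hWT : (R⁻¹)ᵀ = R⁻¹ := by rw [Matrix.transpose_nonsing_inv, hRT]
  have hw : R⁻¹ 1 0 = R⁻¹ 0 1 := by
    have := congrFun (congrFun hWT 0) 1
    simpa [Matrix.transpose_apply] using this
  have hr : R 1 0 = R 0 1 := by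
    have := congrFun (congrFun hRT 0) 1
    simpa [Matrix.transpose_apply] using this
  intro X t ht v H ustar d2
  have ht' : t ∈ Icc (0:ℝ) T := ⟨ht.1, ht.2.le⟩
  have hm : P t 1 0 = P t 0 1 := (hPsymm t ht').apply 0 1
  -- z
  set z : Fin 2 → ℝ := P t *ᵥ X + Ψ t with hz
  -- R *ᵥ ustar = -(Bᵀ *ᵥ z)
  have hRy : R *ᵥ ustar = -(Bᵀ *ᵥ z) := by
    show R *ᵥ (-((R⁻¹ * Bᵀ) *ᵥ z)) = _
    rw [Matrix.mulVec_neg, Matrix.mulVec_mulVec, ← Matrix.mul_assoc, hRinv, Matrix.one_mul]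
  -- hu2 : z ⬝ᵥ (B *ᵥ ustar) = -(z ⬝ᵥ (S *ᵥ z))
  have hu2 : z ⬝ᵥ (B *ᵥ ustar) = -(z ⬝ᵥ ((B * R⁻¹ * Bᵀ) *ᵥ z)) := by
    show z ⬝ᵥ (B *ᵥ (-((R⁻¹ * Bᵀ) *ᵥ z))) = _
    rw [Matrix.mulVec_neg, Matrix.mulVec_mulVec, dotProduct_neg, ← Matrix.mul_assoc]
  -- hu1 : ustar ⬝ᵥ (R *ᵥ ustar) = z ⬝ᵥ (S *ᵥ z)
  have hu1 : ustar ⬝ᵥ (R *ᵥ ustar) = z ⬝ᵥ ((B * R⁻¹ * Bᵀ) *ᵥ z) := by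
    rw [hRy]
    show (-((R⁻¹ * Bᵀ) *ᵥ z)) ⬝ᵥ (-(Bᵀ *ᵥ z)) = _
    rw [neg_dotProduct, dotProduct_neg, neg_neg]
    simp [dotProduct, Matrix.mulVec, Matrix.mul_apply, Fin.sum_univ_two]
    ring
  refine ⟨?_, ?_, ?_⟩
  · -- minimization
    intro u
    have h0 := congrFun hRy 0
    have h1 := congrFun hRy 1
    simp only [hz, Matrix.mulVec, dotProduct, Fin.sum_univ_two, Pi.neg_apply,
      Pi.add_apply, Matrix.transpose_apply] at h0 h1
    have key : H u - H ustar = (1/2) * ((u - ustar) ⬝ᵥ (R *ᵥ (u - ustar))) := by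
      simp only [H, dotProduct, Matrix.mulVec, Fin.sum_univ_two, Pi.add_apply,
        Pi.sub_apply, Pi.neg_apply, Matrix.transpose_apply]
      linear_combination (u 0 - ustar 0) * h0 + (u 1 - ustar 1) * h1
        + ((u 1 - ustar 1) * ustar 0 - (u 0 - ustar 0) * ustar 1) / 2 * hr + (u 0 * ustar 1 - u 1 * ustar 0) * hr
    have hq : 0 ≤ (u - ustar) ⬝ᵥ (R *ᵥ (u - ustar)) := by
      have := hR.posSemidef.dotProduct_mulVec_nonneg (u - ustar)
      simpa using this
    rw [← sub_nonneg, key]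
    linarith [hq]
  · -- HJB / derivative
    -- second derivatives
    have hd20 : d2 0 = P t 0 0 := by
      have hg : (fun s : ℝ => v (X + s • (Pi.single (0 : Fin 2) 1 : Fin 2 → ℝ)) t)
          = fun s => (1/2) * P t 0 0 * s^2
            + (P t 0 0 * X 0 + (P t 0 1 + P t 1 0) / 2 * X 1 + Ψ t 0) * s + v X t := by
        funext s
        simp only [v, dotProduct, Matrix.mulVec, Fin.sum_univ_two, Pi.add_apply,
          Pi.smul_apply, Pi.single_apply, smul_eq_mul]
        norm_num
        ring
      rw [show d2 0 = deriv (deriv fun s : ℝ => v (X + s • (Pi.single (0:Fin 2) 1 : Fin 2 → ℝ)) t) 0 from rfl,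
        hg, quad_deriv2]
      ring
    have hd21 : d2 1 = P t 1 1 := by
      have hg : (fun s : ℝ => v (X + s • (Pi.single (1 : Fin 2) 1 : Fin 2 → ℝ)) t)
          = fun s => (1/2) * P t 1 1 * s^2
            + ((P t 0 1 + P t 1 0) / 2 * X 0 + P t 1 1 * X 1 + Ψ t 1) * s + v X t := by
        funext s
        simp only [v, dotProduct, Matrix.mulVec, Fin.sum_univ_two, Pi.add_apply,
          Pi.smul_apply, Pi.single_apply, smul_eq_mul]
        norm_num
        ring
      rw [show d2 1 = deriv (deriv fun s : ℝ => v (X + s • (Pi.single (1:Fin 2) 1 : Fin 2 → ℝ)) t) 0 from rfl,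
        hg, quad_deriv2]
      ring
    -- the derivative of v X · 
    have hp := hPdiff t ht'
    have hΨc := hasDerivWithinAt_pi.mp (hΨdiff t ht')
    have hχc := hχdiff t ht'
    have hfun : (fun s => v X s) = fun s =>
        (1/2) * (X 0 * (P s 0 0 * X 0 + P s 0 1 * X 1) + X 1 * (P s 1 0 * X 0 + P s 1 1 * X 1))
          + (Ψ s 0 * X 0 + Ψ s 1 * X 1) + χ s := by
      funext s
      simp only [v, dotProduct, Matrix.mulVec, Fin.sum_univ_two]
      try ring
    have hder : HasDerivWithinAt (fun s =>
        (1/2) * (X 0 * (P s 0 0 * X 0 + P s 0 1 * X 1) + X 1 * (P s 1 0 * X 0 + P s 1 1 * X 1))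
          + (Ψ s 0 * X 0 + Ψ s 1 * X 1) + χ s)
        ((1/2) * (X 0 * (P' t 0 0 * X 0 + P' t 0 1 * X 1) + X 1 * (P' t 1 0 * X 0 + P' t 1 1 * X 1))
          + (Ψ' t 0 * X 0 + Ψ' t 1 * X 1) + χ' t) (Icc 0 T) t := by
      exact (((((((hp 0 0).mul_const (X 0)).add ((hp 0 1).mul_const (X 1))).const_mul (X 0)).add
        ((((hp 1 0).mul_const (X 0)).add ((hp 1 1).mul_const (X 1))).const_mul (X 1))).const_mul
          ((1:ℝ)/2)).add (((hΨc 0).mul_const (X 0)).add ((hΨc 1).mul_const (X 1)))).add hχc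
    -- the HJB identity
    have hval : -(H ustar + (1 / 2) * (σ11 ^ 2 * (X 0) ^ 2 * d2 0 + σ22 ^ 2 * (X 1) ^ 2 * d2 1))
        = (1/2) * (X 0 * (P' t 0 0 * X 0 + P' t 0 1 * X 1) + X 1 * (P' t 1 0 * X 0 + P' t 1 1 * X 1))
          + (Ψ' t 0 * X 0 + Ψ' t 1 * X 1) + χ' t := by
      rw [hd20, hd21]
      have hH : H ustar = z ⬝ᵥ (A *ᵥ X + C) - (1/2) * (z ⬝ᵥ ((B * R⁻¹ * Bᵀ) *ᵥ z))
          + (1/2) * (X ⬝ᵥ (Q *ᵥ X)) + L t ⬝ᵥ X := by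
        show z ⬝ᵥ (A *ᵥ X + B *ᵥ ustar + C) + (1/2) * (X ⬝ᵥ (Q *ᵥ X))
            + (1/2) * (ustar ⬝ᵥ (R *ᵥ ustar)) + L t ⬝ᵥ X = _
        rw [show A *ᵥ X + B *ᵥ ustar + C = (A *ᵥ X + C) + B *ᵥ ustar from by abel,
          dotProduct_add, hu2, hu1]
        ring
      rw [hH]
      -- scalarize the ODEs
      have eP := hPeq t ht'
      have e00 := congrFun (congrFun eP 0) 0
      have e01 := congrFun (congrFun eP 0) 1
      have e10 := congrFun (congrFun eP 1) 0
      have e11 := congrFun (congrFun eP 1) 1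
      simp only [Matrix.add_apply, Matrix.sub_apply, Matrix.mul_apply, Fin.sum_univ_two,
        Matrix.transpose_apply, Matrix.zero_apply, Matrix.diagonal_apply, Matrix.cons_val_zero,
        Matrix.cons_val_one, Matrix.head_cons, if_true, reduceIte,
        Matrix.cons_val', Matrix.empty_val'] at e00 e01 e10 e11
      norm_num at e00 e01 e10 e11
      have eΨ := hΨeq t ht'
      have f0 := congrFun eΨ 0
      have f1 := congrFun eΨ 1
      simp only [Pi.add_apply, Pi.sub_apply, Matrix.mulVec, dotProduct, Matrix.mul_apply,
        Fin.sum_univ_two, Matrix.transpose_apply, Pi.zero_apply] at f0 f1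
      have gχ := hχeq t ht'
      simp only [Matrix.mulVec, dotProduct, Matrix.mul_apply, Fin.sum_univ_two,
        Matrix.transpose_apply] at gχ
      simp only [hz, Matrix.mulVec, dotProduct, Matrix.mul_apply, Fin.sum_univ_two,
        Pi.add_apply, Matrix.transpose_apply]
      simp only [hm, hw] at e00 e01 e10 e11 f0 f1 gχ ⊢
      linear_combination (-(X 0 ^ 2 / 2)) * e00 + (-(X 0 * X 1 / 2)) * e01
        + (-(X 0 * X 1 / 2)) * e10 + (-(X 1 ^ 2 / 2)) * e11
        + (-(X 0)) * f0 + (-(X 1)) * f1 + (-1) * gχ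
    rw [hval, hfun]
    exact hder
  · -- terminal condition
    simp only [v]
    rw [hPT, hΨT, hχT]
    simp
end

section
/- Let T > 0, γ > 0, let A, B, D ∈ ℝ^{2×2}, C ∈ ℝ², Q ∈ ℝ^{2×2} symmetric positive semidefinite, R ∈ ℝ^{2×2} symmetric positive definite, φ ∈ ℝ^{2×2} symmetric, and L : [0,T] → ℝ² continuous. Write E := −BR⁻¹Bᵀ + γ⁻²DDᵀ. Suppose P : [0,T] → ℝ^{2×2} (symmetric-valued), Ψ : [0,T] → ℝ² and χ : [0,T] → ℝ are differentiable and satisfy: P'(t) + P(t)A + AᵀP(t) + P(t)E P(t) + Q = 0 with P(T) = φ; Ψ'(t) + AᵀΨ(t) + P(t)C + P(t)E Ψ(t) + L(t) = 0 with Ψ(T) = 0; and χ'(t) + Ψ(t)ᵀC + (1/2)Ψ(t)ᵀE Ψ(t) = 0 with χ(T) = 0. Define v(X,t) = (1/2)XᵀP(t)X + Ψ(t)ᵀX + χ(t), u*(X,t) = −R⁻¹Bᵀ(P(t)X + Ψ(t)), and w*(X,t) = γ⁻²Dᵀ(P(t)X + Ψ(t)). Then for every X ∈ ℝ² and t ∈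 [0,T): (i) ∂ₜv(X,t) + (P(t)X + Ψ(t))ᵀ(AX + Bu*(X,t) + C + Dw*(X,t)) + (1/2)XᵀQX + (1/2)u*(X,t)ᵀRu*(X,t) − (γ²/2)‖w*(X,t)‖² + L(t)ᵀX = 0; (ii) (u*(X,t), w*(X,t)) is a saddle point of the Hamiltonian H(u,w) = (P(t)X + Ψ(t))ᵀ(AX + Bu + C + Dw) + (1/2)XᵀQX + (1/2)uᵀRu − (γ²/2)‖w‖² + L(t)ᵀX, i.e. H(u*, w) ≤ H(u*, w*) ≤ H(u, w*) for all u, w ∈ ℝ²; and (iii) v(X,T) = (1/2)XᵀφX. -/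
open Matrix Set

theorem stmt_6
    (T : ℝ) (hT : 0 < T) (γ : ℝ) (hγ : 0 < γ)
    (A B D : Matrix (Fin 2) (Fin 2) ℝ) (C : Fin 2 → ℝ)
    (Q R φ : Matrix (Fin 2) (Fin 2) ℝ)
    (hQ : Q.PosSemidef) (hR : R.PosDef) (hφ : φ.IsSymm)
    (L : ℝ → Fin 2 → ℝ) (hL : ContinuousOn L (Icc 0 T))
    (E : Matrix (Fin 2) (Fin 2) ℝ) (hE : E = -(B * R⁻¹ * Bᵀ) + (γ ^ 2)⁻¹ • (D * Dᵀ))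
    (P P' : ℝ → Matrix (Fin 2) (Fin 2) ℝ)
    (Ψ Ψ' : ℝ → Fin 2 → ℝ) (χ χ' : ℝ → ℝ)
    (hPsymm : ∀ t ∈ Icc (0:ℝ) T, (P t).IsSymm)
    (hPdiff : ∀ t ∈ Icc (0:ℝ) T, ∀ i j,
      HasDerivWithinAt (fun s => P s i j) (P' t i j) (Icc 0 T) t)
    (hΨdiff : ∀ t ∈ Icc (0:ℝ) T, HasDerivWithinAt Ψ (Ψ' t) (Icc 0 T) t)
    (hχdiff : ∀ t ∈ Icc (0:ℝ) T, HasDerivWithinAt χ (χ' t) (Icc 0 T) t)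
    (hPeq : ∀ t ∈ Icc (0:ℝ) T,
      P' t + P t * A + Aᵀ * P t + P t * E * P t + Q = 0)
    (hPT : P T = φ)
    (hΨeq : ∀ t ∈ Icc (0:ℝ) T,
      Ψ' t + Aᵀ *ᵥ Ψ t + P t *ᵥ C + (P t * E) *ᵥ Ψ t + L t = 0)
    (hΨT : Ψ T = 0)
    (hχeq : ∀ t ∈ Icc (0:ℝ) T,
      χ' t + Ψ t ⬝ᵥ C + (1 / 2) * (Ψ t ⬝ᵥ (E *ᵥ Ψ t)) = 0)
    (hχT : χ T = 0) :
    ∀ X : Fin 2 → ℝ, ∀ t ∈ Ico (0:ℝ) T,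
      let v : (Fin 2 → ℝ) → ℝ → ℝ := fun Y s =>
        (1 / 2) * (Y ⬝ᵥ (P s *ᵥ Y)) + Ψ s ⬝ᵥ Y + χ s
      let H : (Fin 2 → ℝ) → (Fin 2 → ℝ) → ℝ := fun u w =>
        (P t *ᵥ X + Ψ t) ⬝ᵥ (A *ᵥ X + B *ᵥ u + C + D *ᵥ w)
          + (1 / 2) * (X ⬝ᵥ (Q *ᵥ X)) + (1 / 2) * (u ⬝ᵥ (R *ᵥ u))
          - (γ ^ 2 / 2) * (w ⬝ᵥ w) + L t ⬝ᵥ X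
      let ustar : Fin 2 → ℝ := -((R⁻¹ * Bᵀ) *ᵥ (P t *ᵥ X + Ψ t))
      let wstar : Fin 2 → ℝ := (γ ^ 2)⁻¹ • (Dᵀ *ᵥ (P t *ᵥ X + Ψ t))
      HasDerivWithinAt (fun s => v X s) (-(H ustar wstar)) (Icc 0 T) t ∧
        (∀ u w : Fin 2 → ℝ, H ustar w ≤ H ustar wstar ∧ H ustar wstar ≤ H u wstar) ∧
        v X T = (1 / 2) * (X ⬝ᵥ (φ *ᵥ X)) := by
  intro X t ht
  have ht' : t ∈ Icc (0:ℝ) T := ⟨ht.1, le_of_lt ht.2⟩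
  -- basic facts about R
  have hγ2 : (γ:ℝ)^2 ≠ 0 := by positivity
  have hRsy : Rᵀ = R := (by simpa using hR.isHermitian : R.IsSymm)
  have hRdet : IsUnit R.det := hR.det_pos.ne'.isUnit
  have hRu : R * R⁻¹ = 1 := Matrix.mul_nonsing_inv R hRdet
  have hRisy : (R⁻¹)ᵀ = R⁻¹ := by rw [Matrix.transpose_nonsing_inv, hRsy]
  set p : Fin 2 → ℝ := P t *ᵥ X + Ψ t with hp
  -- pairing lemmas
  have hpairR : ∀ x y : Fin 2 → ℝ, x ⬝ᵥ (R *ᵥ y) = y ⬝ᵥ (R *ᵥ x) := by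
    intro x y
    rw [dotProduct_mulVec, ← Matrix.mulVec_transpose, hRsy, dotProduct_comm]
  intro v H ustar wstar
  have hust : ustar = -((R⁻¹ * Bᵀ) *ᵥ p) := rfl
  have hwst : wstar = (γ ^ 2)⁻¹ • (Dᵀ *ᵥ p) := rfl
  -- key identities
  have f3 : R *ᵥ ustar = -(Bᵀ *ᵥ p) := by
    rw [hust, mulVec_neg, mulVec_mulVec, ← Matrix.mul_assoc, hRu, Matrix.one_mul]
  have keyu : ∀ u : Fin 2 → ℝ, p ⬝ᵥ (B *ᵥ u) = -(ustar ⬝ᵥ (R *ᵥ u)) := by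
    intro u
    rw [dotProduct_mulVec, ← Matrix.mulVec_transpose, ← hpairR, f3, dotProduct_neg, neg_neg,
      dotProduct_comm]
  have keyw : ∀ w : Fin 2 → ℝ, p ⬝ᵥ (D *ᵥ w) = γ ^ 2 * (wstar ⬝ᵥ w) := by
    intro w
    rw [hwst, smul_dotProduct, smul_eq_mul, ← mul_assoc, mul_inv_cancel₀ hγ2, one_mul,
      Matrix.mulVec_transpose, ← dotProduct_mulVec]
  have hRpos : ∀ x : Fin 2 → ℝ, 0 ≤ x ⬝ᵥ (R *ᵥ x) := fun x => by
    simpa using hR.posSemidef.dotProduct_mulVec_nonneg x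
  have hPs : P t 1 0 = P t 0 1 := by
    have := congrFun (congrFun (hPsymm t ht') 0) 1
    simpa [Matrix.transpose_apply] using this
  have hRis : R⁻¹ 1 0 = R⁻¹ 0 1 := by
    have := congrFun (congrFun hRisy 0) 1
    simpa [Matrix.transpose_apply] using this
  refine ⟨?_, ?_, ?_⟩
  · -- derivative part
    have hderiv : HasDerivWithinAt (fun s => v X s)
        ((1 / 2) * (X ⬝ᵥ (P' t *ᵥ X)) + Ψ' t ⬝ᵥ X + χ' t) (Icc 0 T) t := by
      have hdot : ∀ M : Matrix (Fin 2) (Fin 2) ℝ,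
          X ⬝ᵥ (M *ᵥ X) = ∑ i, ∑ j, X i * (M i j * X j) := by
        intro M; simp [dotProduct, mulVec, Fin.sum_univ_two]; ring
      have h1 : HasDerivWithinAt (fun s => ∑ i, ∑ j, X i * (P s i j * X j))
          (∑ i, ∑ j, X i * (P' t i j * X j)) (Icc 0 T) t :=
        HasDerivWithinAt.fun_sum fun i _ => HasDerivWithinAt.fun_sum fun j _ =>
          ((hPdiff t ht' i j).mul_const (X j)).const_mul (X i)
      have h2 : HasDerivWithinAt (fun s => Ψ s ⬝ᵥ X) (Ψ' t ⬝ᵥ X) (Icc 0 T) t := by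
        simp only [dotProduct]
        exact HasDerivWithinAt.fun_sum fun i _ =>
          ((hasDerivWithinAt_pi.1 (hΨdiff t ht')) i).mul_const (X i)
      have h1' : HasDerivWithinAt (fun s => (1 / 2) * (X ⬝ᵥ (P s *ᵥ X)))
          ((1 / 2) * (X ⬝ᵥ (P' t *ᵥ X))) (Icc 0 T) t := by
        simp only [hdot]
        exact h1.const_mul _
      exact (h1'.add h2).add (hχdiff t ht')
    have hP' : P' t = -(P t * A + Aᵀ * P t + P t * E * P t + Q) := by
      have h := hPeq t ht'
      apply eq_neg_of_add_eq_zero_left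
      rw [← h]; abel
    have hΨ' : Ψ' t = -(Aᵀ *ᵥ Ψ t + P t *ᵥ C + (P t * E) *ᵥ Ψ t + L t) := by
      have h := hΨeq t ht'
      apply eq_neg_of_add_eq_zero_left
      rw [← h]; abel
    have hχ' : χ' t = -(Ψ t ⬝ᵥ C + (1 / 2) * (Ψ t ⬝ᵥ (E *ᵥ Ψ t))) := by
      have h := hχeq t ht'; linarith
    have hval : (1 / 2) * (X ⬝ᵥ (P' t *ᵥ X)) + Ψ' t ⬝ᵥ X + χ' t = -(H ustar wstar) := by
      -- rewrite H pieces
      have hH : H ustar wstar =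
          p ⬝ᵥ (A *ᵥ X) + p ⬝ᵥ (B *ᵥ ustar) + p ⬝ᵥ C + p ⬝ᵥ (D *ᵥ wstar)
            + (1 / 2) * (X ⬝ᵥ (Q *ᵥ X)) + (1 / 2) * (ustar ⬝ᵥ (R *ᵥ ustar))
            - (γ ^ 2 / 2) * (wstar ⬝ᵥ wstar) + L t ⬝ᵥ X := by
        show (p ⬝ᵥ (A *ᵥ X + B *ᵥ ustar + C + D *ᵥ wstar)) + _ + _ - _ + _ = _
        rw [dotProduct_add, dotProduct_add, dotProduct_add]
      have hu2 : ustar ⬝ᵥ (R *ᵥ ustar) = p ⬝ᵥ ((B * R⁻¹ * Bᵀ) *ᵥ p) := by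
        rw [f3, hust, neg_dotProduct, dotProduct_neg, neg_neg]
        simp only [dotProduct, mulVec, Matrix.mul_apply, Matrix.transpose_apply,
          Fin.sum_univ_two]
        rw [hRis]
        ring
      have hBu : p ⬝ᵥ (B *ᵥ ustar) = -(p ⬝ᵥ ((B * R⁻¹ * Bᵀ) *ᵥ p)) := by
        rw [hust, mulVec_neg, dotProduct_neg, mulVec_mulVec, Matrix.mul_assoc]
      have hDw : p ⬝ᵥ (D *ᵥ wstar) = (γ ^ 2)⁻¹ * (p ⬝ᵥ ((D * Dᵀ) *ᵥ p)) := by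
        rw [hwst, mulVec_smul, dotProduct_smul, smul_eq_mul, mulVec_mulVec]
      have hww : wstar ⬝ᵥ wstar = ((γ ^ 2)⁻¹)^2 * (p ⬝ᵥ ((D * Dᵀ) *ᵥ p)) := by
        rw [hwst, smul_dotProduct, dotProduct_smul, smul_eq_mul, smul_eq_mul,
          dotProduct_mulVec (v := Dᵀ *ᵥ p), ← Matrix.mulVec_transpose,
          Matrix.transpose_transpose, mulVec_mulVec, dotProduct_comm]
        ring
      rw [hH, hu2, hBu, hDw, hww, hP', hΨ', hχ', hp, hE]
      simp only [dotProduct, mulVec, Matrix.mul_apply, Matrix.add_apply, Matrix.neg_apply,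
        Matrix.smul_apply, Matrix.transpose_apply, Fin.sum_univ_two, Pi.add_apply,
        Pi.neg_apply, smul_eq_mul, Pi.smul_apply]
      rw [hPs, hRis]
      field_simp
      ring
    exact hval ▸ hderiv
  · -- saddle point
    intro u w
    have hHform : ∀ u' w' : Fin 2 → ℝ, H u' w' =
        p ⬝ᵥ (A *ᵥ X) + p ⬝ᵥ (B *ᵥ u') + p ⬝ᵥ C + p ⬝ᵥ (D *ᵥ w')
          + (1 / 2) * (X ⬝ᵥ (Q *ᵥ X)) + (1 / 2) * (u' ⬝ᵥ (R *ᵥ u'))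
          - (γ ^ 2 / 2) * (w' ⬝ᵥ w') + L t ⬝ᵥ X := by
      intro u' w'
      show (p ⬝ᵥ (A *ᵥ X + B *ᵥ u' + C + D *ᵥ w')) + _ + _ - _ + _ = _
      rw [dotProduct_add, dotProduct_add, dotProduct_add]
    constructor
    · rw [hHform, hHform, keyw, keyw]
      have h0 : 0 ≤ (w - wstar) ⬝ᵥ (w - wstar) :=
        Finset.sum_nonneg fun i _ => mul_self_nonneg _
      have hexp : (w - wstar) ⬝ᵥ (w - wstar)
          = w ⬝ᵥ w - 2 * (wstar ⬝ᵥ w) + wstar ⬝ᵥ wstar := by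
        rw [sub_dotProduct, dotProduct_sub, dotProduct_sub, dotProduct_comm wstar w]; ring
      nlinarith [mul_nonneg (le_of_lt (show (0:ℝ) < γ ^ 2 / 2 by positivity)) h0]
    · rw [hHform, hHform, keyu, keyu]
      have h0 : 0 ≤ (u - ustar) ⬝ᵥ (R *ᵥ (u - ustar)) := hRpos _
      have hexp : (u - ustar) ⬝ᵥ (R *ᵥ (u - ustar))
          = u ⬝ᵥ (R *ᵥ u) - 2 * (ustar ⬝ᵥ (R *ᵥ u)) + ustar ⬝ᵥ (R *ᵥ ustar) := by
        rw [mulVec_sub, dotProduct_sub, sub_dotProduct, sub_dotProduct, hpairR u ustar]; ring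
      linarith
  · -- terminal condition
    show (1 / 2) * (X ⬝ᵥ (P T *ᵥ X)) + Ψ T ⬝ᵥ X + χ T = (1 / 2) * (X ⬝ᵥ (φ *ᵥ X))
    rw [hPT, hΨT, hχT]
    simp
end
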